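/- In the Gaudin realization, the B-operators satisfy the analytic identity ∂B_M(μ₁,…,μ_M)/∂z_a = −∑_{i=1}^{M} ∂/∂μᵢ ( X⁻_a(μᵢ) B^(1)_{M−1}(μ^(i)) ), where X⁻_a(μ) = X⁻_a/(μ − z_a) − (ξ/2)h_a, for each site a = 1,…,N. -/

import Mathlib

open Finset

/-- The operators B^(k)_M(μ₁,…,μ_M) = ∏_{n=k}^{M+k−1} (X⁻(μ_{n−k+1}) + nξ). -/
noncomputable def Bop {A : Type*} [Ring A] [Module ℂ A]
    (Xm : ℂ → A) (ξ : ℂ) : ℕ → List ℂ → A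
  | _, [] => 1
  | k, μ :: t => (Xm μ + ((k : ℂ) * ξ) • (1 : A)) * Bop Xm ξ (k + 1) t

/-- the argument tuple μ with the i-th entry removed (in increasing index order) -/
noncomputable def rmv {M : ℕ} (μ : Fin M → ℂ) (i : Fin M) : List ℂ :=
  ((Finset.univ.erase i).sort (· ≤ ·)).map μ

/-- the twisted Gaudin generator X⁻(λ) = ∑_b (X⁻_b/(λ−z_b) − (ξ/2)h_b),
    as a function of the inhomogeneity parameters z -/
noncomputable def XmGaudinC {H : Type*} [NormedAddCommGroup H] [NormedSpace ℂ H]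
    {N : ℕ} (z : Fin N → ℂ) (ξ : ℂ) (XmA hA : Fin N → (H →L[ℂ] H)) (lam : ℂ) :
    H →L[ℂ] H :=
  ∑ b, ((lam - z b)⁻¹ • XmA b - (ξ / 2) • hA b)

/-! ### Auxiliary list lemmas about `rmv` -/

lemma sort_erase_univ {n : ℕ} (i : Fin n) :
    (Finset.univ.erase i).sort (· ≤ ·) = (List.finRange n).filter (fun j => j ≠ i) := by
  refine (fun hp h1 h2 => List.Perm.eq_of_pairwise' (r := (· ≤ · : Fin n → Fin n → Prop)) h1 h2 hp) ?_ ?_ ?_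
  · rw [List.perm_ext_iff_of_nodup (Finset.sort_nodup _ _) ((List.nodup_finRange n).filter _)]
    intro j
    simp [Finset.mem_sort, List.mem_filter]
  · exact Finset.pairwise_sort _ _
  · exact (List.pairwise_le_finRange n).filter _

lemma rmv_eq {n : ℕ} (μ : Fin n → ℂ) (i : Fin n) :
    rmv μ i = ((List.finRange n).filter (fun j => j ≠ i)).map μ := by
  rw [rmv, sort_erase_univ]

lemma rmv_zero {M : ℕ} (μ : Fin (M + 1) → ℂ) :
    rmv μ 0 = List.ofFn (fun j : Fin M => μ j.succ) := by
  rw [rmv_eq, List.finRange_succ, List.ofFn_eq_map, List.filter_cons]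
  rw [if_neg (by simp)]
  rw [List.filter_map, List.filter_eq_self.mpr (fun j _ => by simp [Fin.succ_ne_zero]),
    List.map_map]
  rfl

lemma rmv_succ {M : ℕ} (μ : Fin (M + 2) → ℂ) (i : Fin (M + 1)) :
    rmv μ i.succ = μ 0 :: rmv (fun j => μ j.succ) i := by
  rw [rmv_eq, rmv_eq, List.finRange_succ]
  simp only [List.filter_cons]
  have h0 : (0 : Fin (M+2)) ≠ i.succ := (Fin.succ_ne_zero i).symm
  rw [if_pos (by simpa using h0)]
  rw [List.filter_map]
  have : ((fun j : Fin (M+2) => decide (j ≠ i.succ)) ∘ Fin.succ)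
      = fun j : Fin (M+1) => decide (j ≠ i) := by
    funext j; simp [Fin.succ_inj]
  rw [this, List.map_cons, List.map_map]
  rfl

/-! ### The derivative of `Bop` factor by factor -/

noncomputable def Bder {A : Type*} [Ring A] [Module ℂ A]
    (F Fd : ℂ → A) (ξ : ℂ) : ℕ → List ℂ → A
  | _, [] => 0
  | k, μ :: t => Fd μ * Bop F ξ (k + 1) t
      + (F μ + ((k : ℂ) * ξ) • (1 : A)) * Bder F Fd ξ (k + 1) t

section Alg

variable {A : Type*} [Ring A] [Algebra ℂ A]

lemma head_comm (F : ℂ → A) (Xa : A) (ξ : ℂ) (lam : ℂ) (k : ℕ)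
    (hc : F lam * Xa = Xa * F lam + ξ • Xa) :
    (F lam + ((k : ℂ) * ξ) • (1 : A)) * Xa
      = Xa * (F lam + (((k : ℕ) + 1 : ℂ) * ξ) • (1 : A)) := by
  rw [add_mul, mul_add, hc, smul_mul_assoc, mul_smul_comm, one_mul, mul_one, add_assoc,
    ← add_smul]
  ring_nf

lemma Bop_mul_comm (F : ℂ → A) (Xa : A) (ξ : ℂ)
    (hc : ∀ lam, F lam * Xa = Xa * F lam + ξ • Xa) (L : List ℂ) :
    ∀ k : ℕ, Bop F ξ k L * Xa = Xa * Bop F ξ (k + 1) L := by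
  induction L with
  | nil => intro k; simp [Bop]
  | cons μ t ih =>
    intro k
    show (F μ + ((k : ℂ) * ξ) • (1 : A)) * Bop F ξ (k + 1) t * Xa
      = Xa * ((F μ + (((k + 1 : ℕ) : ℂ) * ξ) • (1 : A)) * Bop F ξ (k + 1 + 1) t)
    rw [mul_assoc, ih, ← mul_assoc, head_comm F Xa ξ μ k (hc μ), mul_assoc]
    push_cast
    ring_nf

lemma Bder_eq_sum (F : ℂ → A) (Xa : A) (c : ℂ → ℂ) (ξ : ℂ)
    (hc : ∀ lam, F lam * Xa = Xa * F lam + ξ • Xa) :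
    ∀ (M : ℕ) (μ : Fin (M + 1) → ℂ) (k : ℕ),
      Bder F (fun lam => c lam • Xa) ξ k (List.ofFn μ)
        = ∑ i, c (μ i) • (Xa * Bop F ξ (k + 1) (rmv μ i)) := by
  intro M
  induction M with
  | zero =>
    intro μ k
    have h0 : rmv μ 0 = [] := by rw [rmv_zero]; simp
    have h1 : (List.ofFn μ) = [μ 0] := by
      rw [List.ofFn_succ]; simp
    rw [h1]
    simp [Bder, Bop, h0, smul_mul_assoc, Fin.sum_univ_succ]
  | succ M ih =>
    intro μ k
    rw [List.ofFn_succ]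
    simp only [Bder]
    rw [ih (fun i => μ i.succ) (k + 1), Finset.mul_sum]
    conv_rhs => rw [Fin.sum_univ_succ, rmv_zero]
    rw [smul_mul_assoc]
    congr 1
    apply Finset.sum_congr rfl
    intro j _
    rw [rmv_succ]
    show _ = c (μ j.succ) •
      (Xa * ((F (μ 0) + (((k + 1 : ℕ) : ℂ) * ξ) • (1 : A)) *
        Bop F ξ (k + 1 + 1) (rmv (fun i => μ i.succ) j)))
    rw [mul_smul_comm, ← mul_assoc, head_comm F Xa ξ (μ 0) k (hc (μ 0)), mul_assoc]
    push_cast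
    ring_nf

end Alg

lemma hasDerivAt_Bop {B : Type*} [NormedRing B] [NormedAlgebra ℂ B]
    (G : ℂ → ℂ → B) (Fd : ℂ → B) (ξ t₀ : ℂ) (L : List ℂ)
    (h : ∀ lam ∈ L, HasDerivAt (fun t => G t lam) (Fd lam) t₀) :
    ∀ k : ℕ, HasDerivAt (fun t => Bop (G t) ξ k L) (Bder (G t₀) Fd ξ k L) t₀ := by
  induction L with
  | nil =>
    intro k
    simpa [Bop, Bder] using hasDerivAt_const t₀ (1 : B)
  | cons μ t ih =>
    intro k
    have h1 := (h μ (by simp)).add_const (((k : ℂ) * ξ) • (1 : B))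
    have h2 := ih (fun l hl => h l (by simp [hl])) (k + 1)
    simpa [Bop, Bder] using h1.fun_mul h2

lemma XmGaudinC_comm {H : Type*} [NormedAddCommGroup H] [NormedSpace ℂ H]
    {N : ℕ} (z : Fin N → ℂ) (ξ : ℂ)
    (hA XmA : Fin N → (H →L[ℂ] H))
    (hhXm : ∀ a b, hA a * XmA b - XmA b * hA a = if a = b then (-2 : ℂ) • XmA a else 0)
    (hXmXm : ∀ a b, XmA a * XmA b = XmA b * XmA a) (a : Fin N) :
    ∀ lam, XmGaudinC z ξ XmA hA lam * XmA a
      = XmA a * XmGaudinC z ξ XmA hA lam + ξ • XmA a := by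
  intro lam
  have h2' : ∀ b, hA b * XmA a
      = XmA a * hA b + (if b = a then (-2 : ℂ) • XmA b else 0) := by
    intro b
    have h2 := hhXm b a
    rw [← h2]; abel
  have key : ∀ b : Fin N,
      ((lam - z b)⁻¹ • XmA b - (ξ / 2) • hA b) * XmA a
        = XmA a * ((lam - z b)⁻¹ • XmA b - (ξ / 2) • hA b)
          + (if b = a then ξ • XmA a else 0) := by
    intro b
    rw [sub_mul, mul_sub, smul_mul_assoc, smul_mul_assoc, mul_smul_comm, mul_smul_comm,
      hXmXm b a, h2' b, smul_add]
    split_ifs with hba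
    · subst hba
      rw [smul_smul]
      module
    · rw [smul_zero]
      abel
  unfold XmGaudinC
  rw [Finset.sum_mul, Finset.mul_sum]
  calc ∑ b, ((lam - z b)⁻¹ • XmA b - (ξ / 2) • hA b) * XmA a
      = ∑ b, (XmA a * ((lam - z b)⁻¹ • XmA b - (ξ / 2) • hA b)
          + (if b = a then ξ • XmA a else 0)) := Finset.sum_congr rfl (fun b _ => key b)
    _ = _ := by
      rw [Finset.sum_add_distrib, Finset.sum_ite_eq' Finset.univ a]
      simp

/-- the analytic identity
    ∂B_M(μ)/∂z_a = −∑_i ∂/∂μᵢ ( X⁻_a(μᵢ) B^(1)_{M−1}(μ^(i)) ),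
    where X⁻_a(μ) = X⁻_a/(μ−z_a) − (ξ/2)h_a. -/
theorem Bop_z_derivative
    {H : Type*} [NormedAddCommGroup H] [NormedSpace ℂ H]
    (N : ℕ) (z : Fin N → ℂ) (hz : Function.Injective z) (ξ : ℂ)
    (hA XmA : Fin N → (H →L[ℂ] H))
    (hhXm : ∀ a b, hA a * XmA b - XmA b * hA a = if a = b then (-2 : ℂ) • XmA a else 0)
    (hXmXm : ∀ a b, XmA a * XmA b = XmA b * XmA a)
    (M : ℕ) (μ : Fin (M + 1) → ℂ) (hμ : Function.Injective μ)
    (hdisj : ∀ i b, μ i ≠ z b) (a : Fin N) :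
    deriv (fun t =>
        Bop (XmGaudinC (Function.update z a t) ξ XmA hA) ξ 0 (List.ofFn μ)) (z a) =
      -∑ i, deriv (fun s =>
        ((s - z a)⁻¹ • XmA a - (ξ / 2) • hA a) *
          Bop (XmGaudinC z ξ XmA hA) ξ 1 (rmv μ i)) (μ i) := by
  have hcomm := XmGaudinC_comm z ξ hA XmA hhXm hXmXm a
  -- derivative of each factor in the z_a variable
  have hG : ∀ lam, lam ≠ z a →
      HasDerivAt (fun t => XmGaudinC (Function.update z a t) ξ XmA hA lam)
        (((lam - z a) ^ 2)⁻¹ • XmA a) (z a) := by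
    intro lam hlam
    have hne : lam - z a ≠ 0 := sub_ne_zero.mpr hlam
    have hsum : HasDerivAt
        (fun t => ∑ b, ((lam - Function.update z a t b)⁻¹ • XmA b - (ξ / 2) • hA b))
        (∑ b, (if b = a then ((lam - z a) ^ 2)⁻¹ • XmA a else 0)) (z a) := by
      apply HasDerivAt.fun_sum
      intro b _
      by_cases hba : b = a
      · subst hba
        simp only [Function.update_self, if_pos rfl]
        have hd : HasDerivAt (fun t : ℂ => (lam - t)⁻¹) (((lam - z b) ^ 2)⁻¹) (z b) := by
          have h' := ((hasDerivAt_id (z b)).const_sub lam).inv hne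
          refine h'.congr_deriv ?_
          simp only [id]
          field_simp
        exact (hd.smul_const (XmA b)).sub_const _
      · simp only [Function.update_of_ne hba, if_neg hba]
        exact hasDerivAt_const _ _
    simp only [Finset.sum_ite_eq', Finset.mem_univ, if_true] at hsum
    exact hsum
  have hL : HasDerivAt
      (fun t => Bop (XmGaudinC (Function.update z a t) ξ XmA hA) ξ 0 (List.ofFn μ))
      (Bder (XmGaudinC z ξ XmA hA) (fun lam => ((lam - z a) ^ 2)⁻¹ • XmA a) ξ 0
        (List.ofFn μ)) (z a) := by
    have h := hasDerivAt_Bop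
      (fun t lam => XmGaudinC (Function.update z a t) ξ XmA hA lam)
      (fun lam => ((lam - z a) ^ 2)⁻¹ • XmA a) ξ (z a) (List.ofFn μ)
      (by
        intro lam hlam
        obtain ⟨i, rfl⟩ := List.mem_ofFn.mp hlam
        exact hG (μ i) (hdisj i a)) 0
    rw [Function.update_eq_self a z] at h
    exact h
  rw [hL.deriv,
    Bder_eq_sum (XmGaudinC z ξ XmA hA) (XmA a) (fun lam => ((lam - z a) ^ 2)⁻¹) ξ hcomm M μ 0]
  have hR : ∀ i : Fin (M + 1),
      deriv (fun s =>
        ((s - z a)⁻¹ • XmA a - (ξ / 2) • hA a) *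
          Bop (XmGaudinC z ξ XmA hA) ξ 1 (rmv μ i)) (μ i)
      = -(((μ i - z a) ^ 2)⁻¹ • (XmA a * Bop (XmGaudinC z ξ XmA hA) ξ 1 (rmv μ i))) := by
    intro i
    have hne : μ i - z a ≠ 0 := sub_ne_zero.mpr (hdisj i a)
    have hd : HasDerivAt (fun s : ℂ => (s - z a)⁻¹) (-((μ i - z a) ^ 2)⁻¹) (μ i) := by
      have h' := ((hasDerivAt_id (μ i)).sub_const (z a)).inv hne
      refine h'.congr_deriv ?_
      simp only [id]
      field_simp
    have h := ((hd.smul_const (XmA a)).sub_const ((ξ / 2) • hA a)).mul_const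
      (Bop (XmGaudinC z ξ XmA hA) ξ 1 (rmv μ i))
    rw [h.deriv, neg_smul, neg_mul, smul_mul_assoc]
  simp only [hR]
  rw [Finset.sum_neg_distrib, neg_neg]
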